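/- Let A₁ ⊆ F_p with 1 < |A₁| < p^{1/2} and (A₁-A₁)/(A₁-A₁) = F_p. Then there exist a₁, a₂, b₁, b₂ ∈ A₁ with b₁ ≠ b₂ such that |(a₁-a₂)A₁ + (b₁-b₂)A₁| ≥ c|A₁|² for an absolute constant c > 0. -/

import Mathlib

open Finset Pointwise

private lemma nat_cs {ι : Type*} (s : Finset ι) (f : ι → ℕ) :
    (∑ i ∈ s, f i) ^ 2 ≤ s.card * ∑ i ∈ s, f i ^ 2 := by
  have := sq_sum_le_card_mul_sum_sq (α := ℝ) (s := s) (f := fun i => (f i : ℝ))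
  exact_mod_cast this

/-- Generic Cauchy–Schwarz: card of source squared ≤ card image * collision count. -/
private lemma cs_energy {α β : Type*} [DecidableEq α] [DecidableEq β]
    (P : Finset α) (f : α → β) :
    P.card ^ 2 ≤ (P.image f).card *
      ((P ×ˢ P).filter (fun qq => f qq.1 = f qq.2)).card := by
  set S := P.image f with hS
  have hsum : P.card = ∑ s ∈ S, (P.filter (fun a => f a = s)).card :=
    card_eq_sum_card_fiberwise (fun a ha => mem_image_of_mem f ha)
  have hE : ((P ×ˢ P).filter (fun qq => f qq.1 = f qq.2)).card
      = ∑ s ∈ S, (P.filter (fun a => f a = s)).card ^ 2 := by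
    rw [card_eq_sum_card_fiberwise
      (f := fun qq => f qq.1) (s := (P ×ˢ P).filter (fun qq => f qq.1 = f qq.2)) (t := S) (fun qq hqq => by
        simp only [mem_coe, mem_filter, mem_product] at hqq
        exact mem_image_of_mem f hqq.1.1)]
    refine Finset.sum_congr rfl fun s _ => ?_
    rw [sq, ← card_product]
    congr 1
    ext qq
    simp only [mem_filter, mem_product]
    constructor
    · rintro ⟨⟨⟨h1, h2⟩, h3⟩, h4⟩
      exact ⟨⟨h1, h4⟩, h2, h3 ▸ h4⟩
    · rintro ⟨⟨h1, h4⟩, h2, h5⟩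
      exact ⟨⟨⟨h1, h2⟩, h4.trans h5.symm⟩, h4⟩
  calc P.card ^ 2 = (∑ s ∈ S, (P.filter (fun a => f a = s)).card) ^ 2 := by rw [hsum]
    _ ≤ S.card * ∑ s ∈ S, (P.filter (fun a => f a = s)).card ^ 2 := nat_cs _ _
    _ = S.card * ((P ×ˢ P).filter (fun qq => f qq.1 = f qq.2)).card := by rw [hE]

theorem glibichuk_konyagin_second_case :
    ∃ c : ℝ, 0 < c ∧
      ∀ (p : ℕ) [Fact p.Prime], ∀ (A₁ : Finset (ZMod p)),
        1 < A₁.card → A₁.card ^ 2 < p →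
        {r : ZMod p | ∃ x ∈ A₁, ∃ y ∈ A₁, ∃ z ∈ A₁, ∃ w ∈ A₁,
          z ≠ w ∧ r = (x - y) / (z - w)} = Set.univ →
        ∃ a₁ ∈ A₁, ∃ a₂ ∈ A₁, ∃ b₁ ∈ A₁, ∃ b₂ ∈ A₁, b₁ ≠ b₂ ∧
          c * A₁.card ^ 2 ≤ (((a₁ - a₂) • A₁ + (b₁ - b₂) • A₁).card : ℝ) := by
  refine ⟨1/2, by norm_num, ?_⟩
  intro p _ A₁ hA1 hAp hquot
  set n := A₁.card with hn
  -- the quadruple set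
  set g : (ZMod p × ZMod p) × ZMod p × ZMod p → ZMod p :=
    fun q => (q.1.1 - q.1.2) / (q.2.1 - q.2.2) with hg
  set T : Finset ((ZMod p × ZMod p) × ZMod p × ZMod p) :=
    ((A₁ ×ˢ A₁) ×ˢ A₁ ×ˢ A₁).filter (fun q => q.2.1 ≠ q.2.2) with hT
  -- pigeonhole: some r has a small fiber
  have hTcard : T.card ≤ n ^ 4 := by
    calc T.card ≤ ((A₁ ×ˢ A₁) ×ˢ A₁ ×ˢ A₁).card := card_filter_le _ _
      _ = n ^ 4 := by simp [card_product]; ring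
  obtain ⟨r, hr⟩ : ∃ r : ZMod p, (T.filter (fun q => g q = r)).card ≤ n ^ 2 := by
    by_contra hcon
    push_neg at hcon
    have hsum : T.card = ∑ r ∈ Finset.univ, (T.filter (fun q => g q = r)).card :=
      card_eq_sum_card_fiberwise (fun q _ => mem_univ _)
    have hc : (Finset.univ : Finset (ZMod p)).card = p := by
      simp [ZMod.card p]
    have : p * (n ^ 2 + 1) ≤ T.card := by
      rw [hsum]
      calc p * (n ^ 2 + 1) = ∑ _r ∈ (Finset.univ : Finset (ZMod p)), (n ^ 2 + 1) := by
            rw [Finset.sum_const, hc, smul_eq_mul]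
        _ ≤ _ := Finset.sum_le_sum (fun r _ => hcon r)
    have h2 : p * (n ^ 2 + 1) ≤ n ^ 4 := this.trans hTcard
    have h3 : n ^ 4 < p * (n ^ 2 + 1) := by
      calc n ^ 4 = n ^ 2 * n ^ 2 := by ring
        _ < p * n ^ 2 := by
            apply Nat.mul_lt_mul_of_lt_of_le hAp (le_refl _)
            positivity
        _ ≤ p * (n ^ 2 + 1) := by nlinarith
    omega
  -- r is a quotient of differences
  have hrmem : r ∈ {r : ZMod p | ∃ x ∈ A₁, ∃ y ∈ A₁, ∃ z ∈ A₁, ∃ w ∈ A₁,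
      z ≠ w ∧ r = (x - y) / (z - w)} := by rw [hquot]; trivial
  obtain ⟨a₁, ha₁, a₂, ha₂, b₁, hb₁, b₂, hb₂, hbne, hreq⟩ := hrmem
  refine ⟨a₁, ha₁, a₂, ha₂, b₁, hb₁, b₂, hb₂, hbne, ?_⟩
  have hbsub : b₁ - b₂ ≠ 0 := sub_ne_zero_of_ne hbne
  -- setup Cauchy–Schwarz
  set f : ZMod p × ZMod p → ZMod p := fun q => (a₁ - a₂) * q.1 + (b₁ - b₂) * q.2 with hf
  set P : Finset (ZMod p × ZMod p) := A₁ ×ˢ A₁ with hP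
  set S := P.image f with hSdef
  set E := (P ×ˢ P).filter (fun qq => f qq.1 = f qq.2) with hEdef
  have hcs : n ^ 4 ≤ S.card * E.card := by
    have := cs_energy P f
    rw [hP, card_product, ← hn] at this
    calc n ^ 4 = (n * n) ^ 2 := by ring
      _ ≤ _ := this
  -- energy bound : E.card ≤ 2 * n^2
  have hEbound : E.card ≤ 2 * n ^ 2 := by
    have hsplit := card_filter_add_card_filter_not
      (s := E) (p := fun qq => qq.1.1 = qq.2.1)
    -- diagonal part
    have hdiag : (E.filter (fun qq => qq.1.1 = qq.2.1)).card ≤ n ^ 2 := by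
      have : (E.filter (fun qq => qq.1.1 = qq.2.1)).card ≤ P.card := by
        apply Finset.card_le_card_of_injOn (fun qq => qq.1)
        · intro qq hqq
          simp only [hEdef, mem_coe, mem_filter, mem_product] at hqq
          exact hqq.1.1.1
        · intro x hx y hy hxy
          obtain ⟨hx', hx1⟩ := mem_filter.mp hx
          obtain ⟨-, hfx⟩ := mem_filter.mp hx'
          obtain ⟨hy', hy1⟩ := mem_filter.mp hy
          obtain ⟨-, hfy⟩ := mem_filter.mp hy' 
          -- x.1 = y.1, and the second components are determined
          have h2 : ∀ qq : (ZMod p × ZMod p) × ZMod p × ZMod p,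
              f qq.1 = f qq.2 → qq.1.1 = qq.2.1 → qq.1.2 = qq.2.2 := by
            intro qq hfq heq
            have : (b₁ - b₂) * qq.1.2 = (b₁ - b₂) * qq.2.2 := by
              simp only [hf, heq] at hfq
              linear_combination hfq
            exact mul_left_cancel₀ hbsub this
          have hx2 := h2 x hfx hx1
          have hy2 := h2 y hfy hy1
          have hxy' : x.1 = y.1 := hxy
          exact Prod.ext hxy'
            (((Prod.ext hx1 hx2).symm).trans (hxy'.trans (Prod.ext hy1 hy2)))
      rwa [hP, card_product, ← hn, ← sq] at this
    -- off-diagonal part injects into the fiber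
    have hoff : (E.filter (fun qq => ¬ qq.1.1 = qq.2.1)).card ≤ n ^ 2 := by
      refine le_trans ?_ hr
      apply Finset.card_le_card_of_injOn
        (fun qq => ((qq.2.2, qq.1.2), (qq.1.1, qq.2.1)))
      · intro qq hqq
        obtain ⟨hqq', h6⟩ := mem_filter.mp hqq
        obtain ⟨hqqP, h5⟩ := mem_filter.mp hqq'
        obtain ⟨hq1, hq2⟩ := mem_product.mp hqqP
        obtain ⟨h1, h2⟩ := mem_product.mp hq1
        obtain ⟨h3, h4⟩ := mem_product.mp hq2
        refine mem_filter.mpr ⟨mem_filter.mpr ⟨mem_product.mpr ⟨mem_product.mpr ⟨h4, h2⟩,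
          mem_product.mpr ⟨h1, h3⟩⟩, fun h => h6 h⟩, ?_⟩
        -- the quotient equals r
        have husub : qq.1.1 - qq.2.1 ≠ 0 := sub_ne_zero_of_ne h6
        show (qq.2.2 - qq.1.2) / (qq.1.1 - qq.2.1) = r
        rw [hreq, div_eq_div_iff husub hbsub]
        have h5' : (a₁ - a₂) * qq.1.1 + (b₁ - b₂) * qq.1.2
            = (a₁ - a₂) * qq.2.1 + (b₁ - b₂) * qq.2.2 := h5
        linear_combination -h5'
      · intro x _ y _ hxy
        simp only [Prod.ext_iff] at hxy ⊢
        obtain ⟨⟨e1, e2⟩, e3, e4⟩ := hxy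
        exact ⟨⟨e3, e2⟩, e4, e1⟩
    omega
  -- conclude
  have hfinal : n ^ 2 ≤ 2 * S.card := by
    have h1 : n ^ 4 ≤ S.card * (2 * n ^ 2) :=
      hcs.trans (Nat.mul_le_mul_left _ hEbound)
    have hn0 : 0 < n ^ 2 := by positivity
    have : n ^ 2 * n ^ 2 ≤ (2 * S.card) * n ^ 2 := by
      calc n ^ 2 * n ^ 2 = n ^ 4 := by ring
        _ ≤ S.card * (2 * n ^ 2) := h1
        _ = (2 * S.card) * n ^ 2 := by ring
    exact Nat.le_of_mul_le_mul_right this hn0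
  -- identify S with the sumset
  have hSeq : S = (a₁ - a₂) • A₁ + (b₁ - b₂) • A₁ := by
    ext t
    simp only [hSdef, mem_image, hP, mem_product, Finset.mem_add,
      Finset.mem_smul_finset, smul_eq_mul, hf]
    constructor
    · rintro ⟨⟨u, v⟩, ⟨hu, hv⟩, hft⟩
      exact ⟨_, ⟨u, hu, rfl⟩, _, ⟨v, hv, rfl⟩, hft⟩
    · rintro ⟨-, ⟨u, hu, rfl⟩, -, ⟨v, hv, rfl⟩, h⟩
      exact ⟨(u, v), ⟨hu, hv⟩, h⟩
  rw [← hSeq]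
  have : (n : ℝ) ^ 2 ≤ 2 * S.card := by exact_mod_cast hfinal
  linarith
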